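/- Let μ_B = 0.1, a ∈ [0,1], μ_a = 2μ_B/(1+a), μ_a' = dμ_a/da. Then g(a, 1/2) := (1/2)(2/(e^{-μ_a}μ_a) - 1) - (a + (1-a)/2)·(2μ_a'(1-μ_a))/(e^{-μ_a}μ_a²) > 0. -/
import Mathlib


/-- With μ_B = 0.1, μ_a = 2μ_B/(1+a), μ_a' = -2μ_B/(1+a)²,
    g(a,1/2) = (1/2)(2/(e^{-μ_a}μ_a)-1) - (a+(1-a)/2)·(2μ_a'(1-μ_a))/(e^{-μ_a}μ_a²) > 0. -/
theorem stmt_8 (μB : ℝ) (hμB : μB = 0.1) (a : ℝ) (ha : a ∈ Set.Icc (0:ℝ) 1)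
    (μa μa' : ℝ) (hμa : μa = 2 * μB / (1 + a)) (hμa' : μa' = -(2 * μB) / (1 + a) ^ 2) :
    0 < (1 / 2) * (2 / (Real.exp (-μa) * μa) - 1) -
        (a + (1 - a) / 2) * (2 * μa' * (1 - μa)) / (Real.exp (-μa) * μa ^ 2) := by
  obtain ⟨ha0, ha1⟩ := ha
  have ht : (0:ℝ) < 1 + a := by linarith
  have hμapos : 0 < μa := by
    rw [hμa, hμB]; positivity
  have hμale : μa ≤ 0.2 := by
    rw [hμa, hμB]
    rw [div_le_iff₀ ht]
    nlinarith
  have hexp : 0 < Real.exp (-μa) := Real.exp_pos _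
  have hexp1 : Real.exp (-μa) ≤ 1 := Real.exp_le_one_iff.mpr (by linarith)
  have hden : 0 < Real.exp (-μa) * μa := by positivity
  have hden2 : Real.exp (-μa) * μa ≤ 0.2 := by
    calc Real.exp (-μa) * μa ≤ 1 * μa := by nlinarith
    _ ≤ 0.2 := by linarith
  have hfirst : (10:ℝ) ≤ 2 / (Real.exp (-μa) * μa) := by
    rw [le_div_iff₀ hden]; linarith
  have hμa'neg : μa' < 0 := by
    rw [hμa', hμB]
    have : (0:ℝ) < (1 + a) ^ 2 := by positivity
    exact div_neg_of_neg_of_pos (by norm_num) this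
  have hsecond : (a + (1 - a) / 2) * (2 * μa' * (1 - μa)) / (Real.exp (-μa) * μa ^ 2) ≤ 0 := by
    apply div_nonpos_of_nonpos_of_nonneg
    · have h1 : 0 < a + (1 - a) / 2 := by linarith
      have h2 : 2 * μa' * (1 - μa) ≤ 0 := by nlinarith
      nlinarith
    · positivity
  linarith
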